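/- arXiv:1301.5716 — 7 statements merged into one kernel-verified Lean document; each statement's English description precedes it below -/
import Mathlib

section
/- Let p_{i,j} (i,j ∈ {-1,0,1}, with p_{0,0}=0) be nonnegative reals summing to 1, and let f : Z_+^2 → R satisfy (P1) and (P2). Then in the ring of formal power series R[[x,y]] the identity L(x,y)·H(x,y) = L(x,0)·H(x,0) + L(0,y)·H(0,y) − L(0,0)·H(0,0) holds, where H(x,y) = Σ_{i0,j0≥1} f(i0,j0) x^{i0−1} y^{j0−1}, H(x,0) = Σ_{i0≥1} f(i0,1) x^{i0−1}, H(0,y) = Σ_{j0≥1} f(1,j0) y^{j0−1}, and H(0,0) = f(1,1). -/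
open Finset MvPowerSeries

/-- The kernel `L(x,y) = Σ p_{i,j} x^{1-i} y^{1-j} − x·y` as a formal power series in two
variables. -/
noncomputable def kernelL (p : ℤ → ℤ → ℝ) : MvPowerSeries (Fin 2) ℝ :=
  (∑ i ∈ Finset.Icc (-1 : ℤ) 1, ∑ j ∈ Finset.Icc (-1 : ℤ) 1,
      MvPowerSeries.C (σ := Fin 2) (R := ℝ) (p i j) * MvPowerSeries.X 0 ^ (1 - i).toNat *
        MvPowerSeries.X 1 ^ (1 - j).toNat) -
    MvPowerSeries.X 0 * MvPowerSeries.X 1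

/-- `H(x,y) = Σ_{i0,j0 ≥ 1} f(i0,j0) x^{i0-1} y^{j0-1}`. -/
noncomputable def Hxy (f : ℤ → ℤ → ℝ) : MvPowerSeries (Fin 2) ℝ :=
  fun d => f ((d 0 : ℤ) + 1) ((d 1 : ℤ) + 1)

/-- `H(x,0) = Σ_{i0 ≥ 1} f(i0,1) x^{i0-1}`. -/
noncomputable def Hx0 (f : ℤ → ℤ → ℝ) : MvPowerSeries (Fin 2) ℝ :=
  fun d => if d 1 = 0 then f ((d 0 : ℤ) + 1) 1 else 0

/-- `H(0,y) = Σ_{j0 ≥ 1} f(1,j0) y^{j0-1}`. -/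
noncomputable def H0y (f : ℤ → ℤ → ℝ) : MvPowerSeries (Fin 2) ℝ :=
  fun d => if d 0 = 0 then f 1 ((d 1 : ℤ) + 1) else 0

/-- `L(x,0) = p_{-1,1} x² + p_{0,1} x + p_{1,1}`. -/
noncomputable def Lx0 (p : ℤ → ℤ → ℝ) : MvPowerSeries (Fin 2) ℝ :=
  MvPowerSeries.C (σ := Fin 2) (R := ℝ) (p (-1) 1) * MvPowerSeries.X 0 ^ 2 +
    MvPowerSeries.C (σ := Fin 2) (R := ℝ) (p 0 1) * MvPowerSeries.X 0 + MvPowerSeries.C (σ := Fin 2) (R := ℝ) (p 1 1)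

/-- `L(0,y) = p_{1,-1} y² + p_{1,0} y + p_{1,1}`. -/
noncomputable def L0y (p : ℤ → ℤ → ℝ) : MvPowerSeries (Fin 2) ℝ :=
  MvPowerSeries.C (σ := Fin 2) (R := ℝ) (p 1 (-1)) * MvPowerSeries.X 1 ^ 2 +
    MvPowerSeries.C (σ := Fin 2) (R := ℝ) (p 1 0) * MvPowerSeries.X 1 + MvPowerSeries.C (σ := Fin 2) (R := ℝ) (p 1 1)

lemma icc_sum {M : Type*} [AddCommMonoid M] (g : ℤ → M) :
    ∑ i ∈ Finset.Icc (-1:ℤ) 1, g i = g (-1) + g 0 + g 1 := by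
  rw [show Finset.Icc (-1:ℤ) 1 = {-1, 0, 1} by decide]
  rw [Finset.sum_insert (by decide), Finset.sum_insert (by decide), Finset.sum_singleton,
    add_assoc]

lemma coeff_term (c : ℝ) (a b : ℕ) (φ : MvPowerSeries (Fin 2) ℝ) (d : Fin 2 →₀ ℕ) :
    coeff d (MvPowerSeries.C (σ := Fin 2) (R := ℝ) c * X 0 ^ a * X 1 ^ b * φ) =
      if a ≤ d 0 ∧ b ≤ d 1 then
        c * φ (d - (Finsupp.single 0 a + Finsupp.single 1 b)) else 0 := by
  have h1 : (MvPowerSeries.C (σ := Fin 2) (R := ℝ) c) * X 0 ^ a * X 1 ^ b =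
      monomial (Finsupp.single (0:Fin 2) a + Finsupp.single 1 b) c := by
    rw [X_pow_eq, X_pow_eq, ← monomial_zero_eq_C, monomial_mul_monomial, monomial_mul_monomial]
    simp
  rw [h1, coeff_monomial_mul, coeff_apply]
  congr 1
  rw [eq_iff_iff, Finsupp.le_def]
  constructor
  · intro h; exact ⟨by simpa using h 0, by simpa using h 1⟩
  · rintro ⟨h0, h1⟩ i
    fin_cases i <;> simp [h0, h1, Finsupp.single_apply]

lemma sub_apply0 (d : Fin 2 →₀ ℕ) (a b : ℕ) :
    (d - (Finsupp.single (0 : Fin 2) a + Finsupp.single (1 : Fin 2) b)) 0 = d 0 - a := by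
  simp [Finsupp.tsub_apply, Finsupp.single_apply]
lemma sub_apply1 (d : Fin 2 →₀ ℕ) (a b : ℕ) :
    (d - (Finsupp.single (0 : Fin 2) a + Finsupp.single (1 : Fin 2) b)) 1 = d 1 - b := by
  simp [Finsupp.tsub_apply, Finsupp.single_apply]

theorem functional_equation (p : ℤ → ℤ → ℝ)
    (hp_nonneg : ∀ i j : ℤ, 0 ≤ p i j) (hp00 : p 0 0 = 0)
    (hp_sum : ∑ i ∈ Finset.Icc (-1 : ℤ) 1, ∑ j ∈ Finset.Icc (-1 : ℤ) 1, p i j = 1)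
    (f : ℤ → ℤ → ℝ)
    (hP1 : ∀ i0 j0 : ℤ, 1 ≤ i0 → 1 ≤ j0 →
      f i0 j0 = ∑ i ∈ Finset.Icc (-1 : ℤ) 1, ∑ j ∈ Finset.Icc (-1 : ℤ) 1,
        p i j * f (i0 + i) (j0 + j))
    (hP2 : ∀ i0 j0 : ℤ, 0 ≤ i0 → 0 ≤ j0 → i0 * j0 = 0 → f i0 j0 = 0) :
    kernelL p * Hxy f =
      Lx0 p * Hx0 f + L0y p * H0y f - MvPowerSeries.C (σ := Fin 2) (R := ℝ) (p 1 1) *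
        MvPowerSeries.C (σ := Fin 2) (R := ℝ) (f 1 1) := by
  classical
  ext d
  have eK : kernelL p * Hxy f =
      (∑ i ∈ Finset.Icc (-1:ℤ) 1, ∑ j ∈ Finset.Icc (-1:ℤ) 1,
        MvPowerSeries.C (σ := Fin 2) (R := ℝ) (p i j) * X 0 ^ (1-i).toNat * X 1 ^ (1-j).toNat * Hxy f) -
        MvPowerSeries.C (σ := Fin 2) (R := ℝ) 1 * X 0 ^ 1 * X 1 ^ 1 * Hxy f := by
    rw [kernelL, sub_mul, Finset.sum_mul]
    simp only [Finset.sum_mul]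
    congr 1
    simp [mul_assoc]
  have eX : Lx0 p * Hx0 f =
      MvPowerSeries.C (σ := Fin 2) (R := ℝ) (p (-1) 1) * X 0 ^ 2 * X 1 ^ 0 * Hx0 f
      + MvPowerSeries.C (σ := Fin 2) (R := ℝ) (p 0 1) * X 0 ^ 1 * X 1 ^ 0 * Hx0 f
      + MvPowerSeries.C (σ := Fin 2) (R := ℝ) (p 1 1) * X 0 ^ 0 * X 1 ^ 0 * Hx0 f := by rw [Lx0]; ring
  have eY : L0y p * H0y f =
      MvPowerSeries.C (σ := Fin 2) (R := ℝ) (p 1 (-1)) * X 0 ^ 0 * X 1 ^ 2 * H0y f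
      + MvPowerSeries.C (σ := Fin 2) (R := ℝ) (p 1 0) * X 0 ^ 0 * X 1 ^ 1 * H0y f
      + MvPowerSeries.C (σ := Fin 2) (R := ℝ) (p 1 1) * X 0 ^ 0 * X 1 ^ 0 * H0y f := by rw [L0y]; ring
  rw [eK, eX, eY, ← map_mul]
  simp only [icc_sum, map_sub, map_add, map_sum, coeff_term, coeff_C]
  norm_num [Hxy, Hx0, H0y, sub_apply0, sub_apply1]
  have hd : (d = 0) = (d 0 = 0 ∧ d 1 = 0) := by
    rw [eq_iff_iff]
    constructor
    · rintro rfl; simp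
    · rintro ⟨h0, h1⟩; ext i; fin_cases i <;> simpa
  simp only [hd, show ((2:ℤ)).toNat = 2 from rfl]
  have hz1 : ∀ x : ℤ, 0 ≤ x → f 0 x = 0 := fun x hx => hP2 0 x le_rfl hx (by ring)
  have hz2 : ∀ x : ℤ, 0 ≤ x → f x 0 = 0 := fun x hx => hP2 x 0 hx le_rfl (by ring)
  generalize d 0 = m
  generalize d 1 = n
  have key : ∀ a b : ℤ, 1 ≤ a → 1 ≤ b → f a b =
      p (-1) (-1) * f (a-1) (b-1) + p (-1) 0 * f (a-1) b + p (-1) 1 * f (a-1) (b+1)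
      + p 0 (-1) * f a (b-1) + p 0 1 * f a (b+1)
      + p 1 (-1) * f (a+1) (b-1) + p 1 0 * f (a+1) b + p 1 1 * f (a+1) (b+1) := by
    intro a b ha hb
    have h := hP1 a b ha hb
    simp only [icc_sum] at h
    rw [h, hp00]
    push_cast
    ring_nf
  rcases m with _ | _ | m <;> rcases n with _ | _ | n
  · -- (0,0)
    norm_num
  · -- (0,1)
    norm_num
  · -- (0,n+2)
    have hA : 2 ≤ n+1+1 := by omega
    have hB : 1 ≤ n+1+1 := by omega
    have hC : ¬(n+1+1 = 0) := by omega
    norm_num [hA, hB, hC]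
  · -- (1,0)
    norm_num
  · -- (1,1)
    have h := key 1 1 le_rfl le_rfl
    norm_num [hp00] at h
    rw [hz1 0 le_rfl, hz1 1 zero_le_one, hz1 2 (by norm_num), hz2 1 zero_le_one,
      hz2 2 (by norm_num)] at h
    norm_num [hp00]
    linarith [h]
  · -- (1,n+2)
    have hA : 2 ≤ n+1+1 := by omega
    have hB : 1 ≤ n+1+1 := by omega
    have hC : ¬(n+1+1 = 0) := by omega
    have h := key 1 (n+2) le_rfl (by omega)
    norm_num [hA, hB, hC, hp00]
    push_cast
    ring_nf
    ring_nf at h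
    rw [hz1 (1+(n:ℤ)) (by positivity), hz1 (2+(n:ℤ)) (by positivity),
      hz1 (3+(n:ℤ)) (by positivity)] at h
    ring_nf at h
    linear_combination -h
  · -- (m+2,0)
    have hA : 2 ≤ m+1+1 := by omega
    have hB : 1 ≤ m+1+1 := by omega
    have hC : ¬(m+1+1 = 0) := by omega
    norm_num [hA, hB, hC]
  · -- (m+2,1)
    have hA : 2 ≤ m+1+1 := by omega
    have hB : 1 ≤ m+1+1 := by omega
    have hC : ¬(m+1+1 = 0) := by omega
    have h := key (m+2) 1 (by omega) le_rfl
    norm_num [hA, hB, hC, hp00]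
    push_cast
    ring_nf
    ring_nf at h
    rw [hz2 (1+(m:ℤ)) (by positivity), hz2 (2+(m:ℤ)) (by positivity),
      hz2 (3+(m:ℤ)) (by positivity)] at h
    ring_nf at h
    linear_combination -h
  · -- (m+2,n+2)
    have hA : 2 ≤ n+1+1 := by omega
    have hB : 1 ≤ n+1+1 := by omega
    have hC : ¬(n+1+1 = 0) := by omega
    have hA' : 2 ≤ m+1+1 := by omega
    have hB' : 1 ≤ m+1+1 := by omega
    have hC' : ¬(m+1+1 = 0) := by omega
    have h := key (m+2) (n+2) (by omega) (by omega)
    norm_num [hA, hB, hC, hA', hB', hC', hp00]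
    push_cast
    ring_nf
    ring_nf at h
    linear_combination -h
end

section
/- Let the walk satisfy (H1), and let f : Z_+^2 → R be nonnegative and satisfy (P1) and (P2). Then for all points a, b in the open quadrant (Z_{≥1})², one has the Harnack-type inequality f(b)·G(a,b) ≤ f(a)·G(b,b), where the products are taken in [0,∞]. -/
open Finset
open scoped ENNReal

/-- `killedStep p n a b` is the `n`-step transition probability from `a` to `b` of the walk
with jumps `p`, killed at the boundary of the quarter plane: the sum, over all sequences of
`n` small steps whose partial sums starting from `a` stay in the open quadrant and lead
to `b`, of the product of the step probabilities. -/
noncomputable def killedStep (p : ℤ → ℤ → ℝ) (n : ℕ) (a b : ℤ × ℤ) : ℝ :=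
  ∑ e : Fin n → (Finset.Icc ((-1, -1) : ℤ × ℤ) (1, 1)),
    if (∀ k : Fin n, 1 ≤ (a + ∑ l ∈ Finset.Iic k, (e l : ℤ × ℤ)).1 ∧
          1 ≤ (a + ∑ l ∈ Finset.Iic k, (e l : ℤ × ℤ)).2) ∧
        a + (∑ l : Fin n, (e l : ℤ × ℤ)) = b then
      ∏ k : Fin n, p (e k : ℤ × ℤ).1 (e k : ℤ × ℤ).2
    else 0

/-- The Green function (with values in `[0,∞]`) of the walk killed at the boundary of the
quarter plane. -/
noncomputable def greenFn (p : ℤ → ℤ → ℝ) (a b : ℤ × ℤ) : ℝ≥0∞ :=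
  ∑' n : ℕ, ENNReal.ofReal (killedStep p n a b)

namespace HarnackAux

noncomputable abbrev S : Finset (ℤ × ℤ) := Finset.Icc (-1, -1) (1, 1)

lemma cons_Iic_zero (n : ℕ) (x : S) (g : Fin n → S) :
    ∑ l ∈ Finset.Iic (0 : Fin (n+1)), ((Fin.cons x g : Fin (n+1) → S) l : ℤ × ℤ) = (x : ℤ × ℤ) := by
  have : Finset.Iic (0 : Fin (n+1)) = {0} := by ext l; simp [Fin.le_zero_iff]
  rw [this, Finset.sum_singleton, Fin.cons_zero]

lemma cons_Iic_succ (n : ℕ) (x : S) (g : Fin n → S) (k : Fin n) :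
    ∑ l ∈ Finset.Iic (k.succ), ((Fin.cons x g : Fin (n+1) → S) l : ℤ × ℤ) =
      (x : ℤ × ℤ) + ∑ l ∈ Finset.Iic k, (g l : ℤ × ℤ) := by
  have h1 : Finset.Iic k.succ = Finset.filter (· ≤ k.succ) Finset.univ := by ext l; simp
  have h2 : Finset.Iic k = Finset.filter (· ≤ k) Finset.univ := by ext l; simp
  rw [h1, h2, Finset.sum_filter, Finset.sum_filter, Fin.sum_univ_succ]
  simp [Fin.succ_le_succ_iff]

lemma killedStep_zero (p : ℤ → ℤ → ℝ) (a b : ℤ × ℤ) :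
    killedStep p 0 a b = if a = b then 1 else 0 := by
  simp [killedStep]

lemma killedStep_succ (p : ℤ → ℤ → ℝ) (n : ℕ) (a b : ℤ × ℤ) :
    killedStep p (n+1) a b = ∑ e ∈ S, p e.1 e.2 *
      (if 1 ≤ (a + e).1 ∧ 1 ≤ (a + e).2 then killedStep p n (a + e) b else 0) := by
  rw [← Finset.sum_coe_sort S]
  rw [show killedStep p (n+1) a b
      = ∑ q : S × (Fin n → S), (fun e : Fin (n+1) → S =>
        if (∀ k : Fin (n+1), 1 ≤ (a + ∑ l ∈ Finset.Iic k, (e l : ℤ × ℤ)).1 ∧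
              1 ≤ (a + ∑ l ∈ Finset.Iic k, (e l : ℤ × ℤ)).2) ∧
            a + (∑ l : Fin (n+1), (e l : ℤ × ℤ)) = b then
          ∏ k : Fin (n+1), p (e k : ℤ × ℤ).1 (e k : ℤ × ℤ).2
        else 0) (Fin.consEquiv (fun _ => S) q) from
    (Equiv.sum_comp (Fin.consEquiv (fun _ => S)) _).symm]
  rw [Fintype.sum_prod_type]
  refine Finset.sum_congr rfl fun x _ => ?_
  have key : ∀ g : Fin n → S,
      (fun e : Fin (n+1) → S =>
        if (∀ k : Fin (n+1), 1 ≤ (a + ∑ l ∈ Finset.Iic k, (e l : ℤ × ℤ)).1 ∧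
              1 ≤ (a + ∑ l ∈ Finset.Iic k, (e l : ℤ × ℤ)).2) ∧
            a + (∑ l : Fin (n+1), (e l : ℤ × ℤ)) = b then
          ∏ k : Fin (n+1), p (e k : ℤ × ℤ).1 (e k : ℤ × ℤ).2
        else 0) (Fin.consEquiv (fun _ => S) (x, g))
      = p (x : ℤ × ℤ).1 (x : ℤ × ℤ).2 *
        (if 1 ≤ (a + (x : ℤ × ℤ)).1 ∧ 1 ≤ (a + (x : ℤ × ℤ)).2 then
          (if (∀ k : Fin n, 1 ≤ ((a + (x:ℤ×ℤ)) + ∑ l ∈ Finset.Iic k, (g l : ℤ × ℤ)).1 ∧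
              1 ≤ ((a + (x:ℤ×ℤ)) + ∑ l ∈ Finset.Iic k, (g l : ℤ × ℤ)).2) ∧
            (a + (x:ℤ×ℤ)) + (∑ l : Fin n, (g l : ℤ × ℤ)) = b then
            ∏ k : Fin n, p (g k : ℤ × ℤ).1 (g k : ℤ × ℤ).2 else 0)
        else 0) := by
    intro g
    have hc : (Fin.consEquiv (fun _ => S) (x, g)) = (Fin.cons x g : Fin (n+1) → S) := rfl
    rw [hc]
    have hcond : ((∀ k : Fin (n+1), 1 ≤ (a + ∑ l ∈ Finset.Iic k, ((Fin.cons x g : Fin (n+1) → S) l : ℤ × ℤ)).1 ∧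
              1 ≤ (a + ∑ l ∈ Finset.Iic k, ((Fin.cons x g : Fin (n+1) → S) l : ℤ × ℤ)).2) ∧
            a + (∑ l : Fin (n+1), ((Fin.cons x g : Fin (n+1) → S) l : ℤ × ℤ)) = b)
        ↔ ((1 ≤ (a + (x : ℤ × ℤ)).1 ∧ 1 ≤ (a + (x : ℤ × ℤ)).2) ∧
           ((∀ k : Fin n, 1 ≤ ((a + (x:ℤ×ℤ)) + ∑ l ∈ Finset.Iic k, (g l : ℤ × ℤ)).1 ∧
              1 ≤ ((a + (x:ℤ×ℤ)) + ∑ l ∈ Finset.Iic k, (g l : ℤ × ℤ)).2) ∧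
            (a + (x:ℤ×ℤ)) + (∑ l : Fin n, (g l : ℤ × ℤ)) = b)) := by
      rw [Fin.forall_fin_succ]
      have htot : (∑ l : Fin (n+1), ((Fin.cons x g : Fin (n+1) → S) l : ℤ × ℤ))
          = (x : ℤ × ℤ) + ∑ l : Fin n, (g l : ℤ × ℤ) := by
        rw [Fin.sum_univ_succ]; simp
      rw [htot, cons_Iic_zero]
      constructor
      · rintro ⟨⟨h0, hs⟩, hf⟩
        refine ⟨h0, ⟨fun k => ?_, by rw [add_assoc]; exact hf⟩⟩
        have := hs k; rwa [cons_Iic_succ, ← add_assoc] at this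
      · rintro ⟨h0, ⟨hs, hf⟩⟩
        refine ⟨⟨h0, fun k => ?_⟩, by rw [← add_assoc]; exact hf⟩
        rw [cons_Iic_succ, ← add_assoc]; exact hs k
    simp only [hcond]
    have hprod : (∏ k : Fin (n+1), p ((Fin.cons x g : Fin (n+1) → S) k : ℤ × ℤ).1
        ((Fin.cons x g : Fin (n+1) → S) k : ℤ × ℤ).2)
        = p (x : ℤ × ℤ).1 (x : ℤ × ℤ).2 * ∏ k : Fin n, p (g k : ℤ × ℤ).1 (g k : ℤ × ℤ).2 := by
      rw [Fin.prod_univ_succ]; simp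
    rw [hprod]
    by_cases h1 : 1 ≤ (a + (x : ℤ × ℤ)).1 ∧ 1 ≤ (a + (x : ℤ × ℤ)).2
    · by_cases h2 : (∀ k : Fin n, 1 ≤ ((a + (x:ℤ×ℤ)) + ∑ l ∈ Finset.Iic k, (g l : ℤ × ℤ)).1 ∧
              1 ≤ ((a + (x:ℤ×ℤ)) + ∑ l ∈ Finset.Iic k, (g l : ℤ × ℤ)).2) ∧
            (a + (x:ℤ×ℤ)) + (∑ l : Fin n, (g l : ℤ × ℤ)) = b
      · rw [if_pos ⟨h1, h2⟩, if_pos h1, if_pos h2]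
      · rw [if_neg (by tauto), if_pos h1, if_neg h2, mul_zero]
    · rw [if_neg (by tauto), if_neg h1, mul_zero]
  rw [Finset.sum_congr rfl (fun g _ => key g)]
  rw [← Finset.mul_sum]
  congr 1
  by_cases h1 : 1 ≤ (a + (x : ℤ × ℤ)).1 ∧ 1 ≤ (a + (x : ℤ × ℤ)).2
  · simp only [if_pos h1]
    rfl
  · simp only [if_neg h1, Finset.sum_const_zero]



noncomputable def Hh (p : ℤ → ℤ → ℝ) (b : ℤ × ℤ) : ℕ → (ℤ × ℤ) → ℝ
  | 0, a => if a = b then 1 else 0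
  | n+1, a => if a = b then 0 else ∑ e ∈ S, p e.1 e.2 *
      (if 1 ≤ (a + e).1 ∧ 1 ≤ (a + e).2 then Hh p b n (a + e) else 0)

lemma sum_S (F : ℤ × ℤ → ℝ) :
    ∑ e ∈ S, F e = ∑ i ∈ Finset.Icc (-1 : ℤ) 1, ∑ j ∈ Finset.Icc (-1 : ℤ) 1, F (i, j) := by
  rw [show S = Finset.Icc (-1 : ℤ) 1 ×ˢ Finset.Icc (-1 : ℤ) 1 from Finset.Icc_prod_def _ _,
    Finset.sum_product]

lemma mem_S {e : ℤ × ℤ} (he : e ∈ S) : -1 ≤ e.1 ∧ e.1 ≤ 1 ∧ -1 ≤ e.2 ∧ e.2 ≤ 1 := by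
  rw [Finset.mem_Icc, Prod.le_def, Prod.le_def] at he
  exact ⟨he.1.1, he.2.1, he.1.2, he.2.2⟩

variable {p : ℤ → ℤ → ℝ} (hp : ∀ i j : ℤ, 0 ≤ p i j)
include hp

lemma killedStep_nonneg (n : ℕ) (a b : ℤ × ℤ) : 0 ≤ killedStep p n a b := by
  induction n generalizing a with
  | zero => rw [killedStep_zero]; split <;> norm_num
  | succ n ih =>
      rw [killedStep_succ]
      refine Finset.sum_nonneg fun e _ => mul_nonneg (hp _ _) ?_
      split
      · exact ih _
      · exact le_refl 0

lemma Hh_nonneg (b : ℤ × ℤ) (n : ℕ) (a : ℤ × ℤ) : 0 ≤ Hh p b n a := by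
  induction n generalizing a with
  | zero => rw [Hh]; split <;> norm_num
  | succ n ih =>
      rw [Hh]; split
      · exact le_refl 0
      · refine Finset.sum_nonneg fun e _ => mul_nonneg (hp _ _) ?_
        split
        · exact ih _
        · exact le_refl 0

omit hp

lemma sum_Hh_self (b : ℤ × ℤ) (N : ℕ) : ∑ k ∈ Finset.range (N + 1), Hh p b k b = 1 := by
  rw [Finset.sum_range_succ']
  have h1 : ∀ i, Hh p b (i + 1) b = 0 := fun i => by rw [Hh, if_pos rfl]
  simp [h1, Hh]

lemma sum_Hh_ne {a b : ℤ × ℤ} (hab : a ≠ b) (N : ℕ) :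
    ∑ k ∈ Finset.range (N + 1), Hh p b k a
      = ∑ e ∈ S, p e.1 e.2 * (if 1 ≤ (a + e).1 ∧ 1 ≤ (a + e).2 then
          ∑ k ∈ Finset.range N, Hh p b k (a + e) else 0) := by
  rw [Finset.sum_range_succ']
  have h0 : Hh p b 0 a = 0 := by rw [Hh, if_neg hab]
  have h1 : ∀ i, Hh p b (i + 1) a = ∑ e ∈ S, p e.1 e.2 *
      (if 1 ≤ (a + e).1 ∧ 1 ≤ (a + e).2 then Hh p b i (a + e) else 0) := fun i => by
    rw [Hh, if_neg hab]
  rw [h0, add_zero]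
  rw [Finset.sum_congr rfl fun i _ => h1 i, Finset.sum_comm]
  refine Finset.sum_congr rfl fun e _ => ?_
  rw [← Finset.mul_sum]
  congr 1
  by_cases hC : 1 ≤ (a + e).1 ∧ 1 ≤ (a + e).2 <;> simp [hC]

-- statement (B)
lemma harmonic_bound
    (f : ℤ → ℤ → ℝ)
    (hf_nonneg : ∀ i0 j0 : ℤ, 0 ≤ i0 → 0 ≤ j0 → 0 ≤ f i0 j0)
    (hP1 : ∀ i0 j0 : ℤ, 1 ≤ i0 → 1 ≤ j0 →
      f i0 j0 = ∑ i ∈ Finset.Icc (-1 : ℤ) 1, ∑ j ∈ Finset.Icc (-1 : ℤ) 1,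
        p i j * f (i0 + i) (j0 + j))
    (b : ℤ × ℤ) (hb : 1 ≤ b.1 ∧ 1 ≤ b.2) (hp : ∀ i j : ℤ, 0 ≤ p i j) :
    ∀ N : ℕ, ∀ a : ℤ × ℤ, 1 ≤ a.1 → 1 ≤ a.2 →
      f b.1 b.2 * ∑ k ∈ Finset.range N, Hh p b k a ≤ f a.1 a.2 := by
  intro N
  induction N with
  | zero => intro a ha1 ha2; simpa using hf_nonneg _ _ (by omega) (by omega)
  | succ N ih =>
      intro a ha1 ha2
      by_cases hab : a = b
      · subst hab
        rw [sum_Hh_self, mul_one]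
      · rw [sum_Hh_ne hab]
        have key : ∀ e ∈ S,
            f b.1 b.2 * (p e.1 e.2 * (if 1 ≤ (a + e).1 ∧ 1 ≤ (a + e).2 then
              ∑ k ∈ Finset.range N, Hh p b k (a + e) else 0))
            ≤ p e.1 e.2 * f (a.1 + e.1) (a.2 + e.2) := by
          intro e he
          obtain ⟨he1, -, he2, -⟩ := mem_S he
          have hnn : 0 ≤ f (a.1 + e.1) (a.2 + e.2) :=
            hf_nonneg _ _ (by omega) (by omega)
          rw [mul_left_comm]
          refine mul_le_mul_of_nonneg_left ?_ (hp _ _)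
          by_cases hC : 1 ≤ (a + e).1 ∧ 1 ≤ (a + e).2
          · rw [if_pos hC]
            exact ih (a + e) hC.1 hC.2
          · rw [if_neg hC, mul_zero]
            exact hnn
        calc f b.1 b.2 * ∑ e ∈ S, p e.1 e.2 * (if 1 ≤ (a + e).1 ∧ 1 ≤ (a + e).2 then
              ∑ k ∈ Finset.range N, Hh p b k (a + e) else 0)
            = ∑ e ∈ S, f b.1 b.2 * (p e.1 e.2 * (if 1 ≤ (a + e).1 ∧ 1 ≤ (a + e).2 then
              ∑ k ∈ Finset.range N, Hh p b k (a + e) else 0)) := Finset.mul_sum _ _ _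
          _ ≤ ∑ e ∈ S, p e.1 e.2 * f (a.1 + e.1) (a.2 + e.2) := Finset.sum_le_sum key
          _ = f a.1 a.2 := by
              rw [sum_S (fun e => p e.1 e.2 * f (a.1 + e.1) (a.2 + e.2))]
              exact (hP1 a.1 a.2 ha1 ha2).symm

-- statement (A)
lemma passage_decomp (hp : ∀ i j : ℤ, 0 ≤ p i j) (b : ℤ × ℤ) :
    ∀ n : ℕ, ∀ a : ℤ × ℤ, 1 ≤ a.1 → 1 ≤ a.2 →
      ∑ j ∈ Finset.range (n + 1), killedStep p j a b ≤
        (∑ k ∈ Finset.range (n + 1), Hh p b k a) *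
          (∑ m ∈ Finset.range (n + 1), killedStep p m b b) := by
  intro n
  induction n with
  | zero =>
      intro a ha1 ha2
      simp only [Nat.zero_add, Finset.range_one, Finset.sum_singleton]
      rw [killedStep_zero, killedStep_zero, Hh, if_pos rfl]
      split <;> simp
  | succ n ih =>
      intro a ha1 ha2
      have hM : (0:ℝ) ≤ ∑ m ∈ Finset.range (n + 1), killedStep p m b b :=
        Finset.sum_nonneg fun m _ => killedStep_nonneg hp m b b
      have hMmono : (∑ m ∈ Finset.range (n + 1), killedStep p m b b)
          ≤ ∑ m ∈ Finset.range (n + 2), killedStep p m b b := by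
        rw [Finset.sum_range_succ (n := n + 1)]
        nlinarith [killedStep_nonneg hp (n+1) b b]
      by_cases hab : a = b
      · subst hab
        rw [sum_Hh_self, one_mul]
      · -- a ≠ b
        have step1 : ∑ j ∈ Finset.range (n + 2), killedStep p j a b
            = ∑ e ∈ S, p e.1 e.2 * (if 1 ≤ (a + e).1 ∧ 1 ≤ (a + e).2 then
                ∑ j ∈ Finset.range (n + 1), killedStep p j (a + e) b else 0) := by
          rw [Finset.sum_range_succ']
          rw [killedStep_zero, if_neg hab, add_zero]
          rw [Finset.sum_congr rfl fun j _ => killedStep_succ p j a b, Finset.sum_comm]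
          refine Finset.sum_congr rfl fun e _ => ?_
          rw [← Finset.mul_sum]
          congr 1
          by_cases hC : 1 ≤ (a + e).1 ∧ 1 ≤ (a + e).2 <;> simp [hC]
        rw [step1]
        have step2 : ∀ e ∈ S,
            p e.1 e.2 * (if 1 ≤ (a + e).1 ∧ 1 ≤ (a + e).2 then
                ∑ j ∈ Finset.range (n + 1), killedStep p j (a + e) b else 0)
            ≤ (p e.1 e.2 * (if 1 ≤ (a + e).1 ∧ 1 ≤ (a + e).2 then
                ∑ k ∈ Finset.range (n + 1), Hh p b k (a + e) else 0)) *
              (∑ m ∈ Finset.range (n + 1), killedStep p m b b) := by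
          intro e _
          by_cases hC : 1 ≤ (a + e).1 ∧ 1 ≤ (a + e).2
          · rw [if_pos hC, if_pos hC, mul_assoc]
            exact mul_le_mul_of_nonneg_left (ih (a + e) hC.1 hC.2) (hp _ _)
          · rw [if_neg hC, if_neg hC]; simp
        calc ∑ e ∈ S, p e.1 e.2 * (if 1 ≤ (a + e).1 ∧ 1 ≤ (a + e).2 then
                ∑ j ∈ Finset.range (n + 1), killedStep p j (a + e) b else 0)
            ≤ ∑ e ∈ S, (p e.1 e.2 * (if 1 ≤ (a + e).1 ∧ 1 ≤ (a + e).2 then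
                ∑ k ∈ Finset.range (n + 1), Hh p b k (a + e) else 0)) *
              (∑ m ∈ Finset.range (n + 1), killedStep p m b b) :=
              Finset.sum_le_sum step2
          _ = (∑ k ∈ Finset.range (n + 2), Hh p b k a) *
              (∑ m ∈ Finset.range (n + 1), killedStep p m b b) := by
              rw [← Finset.sum_mul, ← sum_Hh_ne hab]
          _ ≤ (∑ k ∈ Finset.range (n + 2), Hh p b k a) *
              (∑ m ∈ Finset.range (n + 2), killedStep p m b b) := by
              refine mul_le_mul_of_nonneg_left hMmono ?_
              exact Finset.sum_nonneg fun k _ => Hh_nonneg hp b k a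

lemma real_core (hp : ∀ i j : ℤ, 0 ≤ p i j)
    (f : ℤ → ℤ → ℝ)
    (hf_nonneg : ∀ i0 j0 : ℤ, 0 ≤ i0 → 0 ≤ j0 → 0 ≤ f i0 j0)
    (hP1 : ∀ i0 j0 : ℤ, 1 ≤ i0 → 1 ≤ j0 →
      f i0 j0 = ∑ i ∈ Finset.Icc (-1 : ℤ) 1, ∑ j ∈ Finset.Icc (-1 : ℤ) 1,
        p i j * f (i0 + i) (j0 + j))
    (a b : ℤ × ℤ) (ha : 1 ≤ a.1 ∧ 1 ≤ a.2) (hb : 1 ≤ b.1 ∧ 1 ≤ b.2) (N : ℕ) :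
    f b.1 b.2 * ∑ n ∈ Finset.range N, killedStep p n a b ≤
      f a.1 a.2 * ∑ m ∈ Finset.range N, killedStep p m b b := by
  cases N with
  | zero => simp
  | succ N =>
      have hA := passage_decomp hp b N a ha.1 ha.2
      have hB := harmonic_bound f hf_nonneg hP1 b hb hp (N + 1) a ha.1 ha.2
      have hfb : (0:ℝ) ≤ f b.1 b.2 := hf_nonneg _ _ (by omega) (by omega)
      have hM : (0:ℝ) ≤ ∑ m ∈ Finset.range (N + 1), killedStep p m b b :=
        Finset.sum_nonneg fun m _ => killedStep_nonneg hp m b b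
      calc f b.1 b.2 * ∑ n ∈ Finset.range (N + 1), killedStep p n a b
          ≤ f b.1 b.2 * ((∑ k ∈ Finset.range (N + 1), Hh p b k a) *
              (∑ m ∈ Finset.range (N + 1), killedStep p m b b)) :=
            mul_le_mul_of_nonneg_left hA hfb
        _ = (f b.1 b.2 * ∑ k ∈ Finset.range (N + 1), Hh p b k a) *
              (∑ m ∈ Finset.range (N + 1), killedStep p m b b) := by ring
        _ ≤ f a.1 a.2 * ∑ m ∈ Finset.range (N + 1), killedStep p m b b :=
            mul_le_mul_of_nonneg_right hB hM


end HarnackAux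

theorem harnack_inequality (p : ℤ → ℤ → ℝ)
    -- (H1)
    (hp_nonneg : ∀ i j : ℤ, 0 ≤ p i j) (hp00 : p 0 0 = 0)
    (hp_sum : ∑ i ∈ Finset.Icc (-1 : ℤ) 1, ∑ j ∈ Finset.Icc (-1 : ℤ) 1, p i j = 1)
    (f : ℤ → ℤ → ℝ)
    (hf_nonneg : ∀ i0 j0 : ℤ, 0 ≤ i0 → 0 ≤ j0 → 0 ≤ f i0 j0)
    -- (P1)
    (hP1 : ∀ i0 j0 : ℤ, 1 ≤ i0 → 1 ≤ j0 →
      f i0 j0 = ∑ i ∈ Finset.Icc (-1 : ℤ) 1, ∑ j ∈ Finset.Icc (-1 : ℤ) 1,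
        p i j * f (i0 + i) (j0 + j))
    -- (P2)
    (hP2 : ∀ i0 j0 : ℤ, 0 ≤ i0 → 0 ≤ j0 → i0 * j0 = 0 → f i0 j0 = 0)
    (a b : ℤ × ℤ) (ha : 1 ≤ a.1 ∧ 1 ≤ a.2) (hb : 1 ≤ b.1 ∧ 1 ≤ b.2) :
    ENNReal.ofReal (f b.1 b.2) * greenFn p a b ≤ ENNReal.ofReal (f a.1 a.2) * greenFn p b b := by
  have hfb : 0 ≤ f b.1 b.2 := hf_nonneg _ _ (by omega) (by omega)
  have hfa : 0 ≤ f a.1 a.2 := hf_nonneg _ _ (by omega) (by omega)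
  rw [show greenFn p a b = ⨆ s : Finset ℕ, ∑ n ∈ s, ENNReal.ofReal (killedStep p n a b) from
    ENNReal.tsum_eq_iSup_sum, ENNReal.mul_iSup]
  refine iSup_le fun s => ?_
  obtain ⟨N, hN⟩ := s.exists_nat_subset_range
  calc ENNReal.ofReal (f b.1 b.2) * ∑ n ∈ s, ENNReal.ofReal (killedStep p n a b)
      ≤ ENNReal.ofReal (f b.1 b.2) *
          ∑ n ∈ Finset.range N, ENNReal.ofReal (killedStep p n a b) :=
        mul_le_mul_right (Finset.sum_le_sum_of_subset hN) _
    _ = ENNReal.ofReal (f b.1 b.2 * ∑ n ∈ Finset.range N, killedStep p n a b) := by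
        rw [ENNReal.ofReal_mul hfb,
          ENNReal.ofReal_sum_of_nonneg fun n _ => HarnackAux.killedStep_nonneg hp_nonneg n a b]
    _ ≤ ENNReal.ofReal (f a.1 a.2 * ∑ m ∈ Finset.range N, killedStep p m b b) :=
        ENNReal.ofReal_le_ofReal
          (HarnackAux.real_core hp_nonneg f hf_nonneg hP1 a b ha hb N)
    _ = ENNReal.ofReal (f a.1 a.2) *
          ∑ m ∈ Finset.range N, ENNReal.ofReal (killedStep p m b b) := by
        rw [ENNReal.ofReal_mul hfa,
          ENNReal.ofReal_sum_of_nonneg fun m _ => HarnackAux.killedStep_nonneg hp_nonneg m b b]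
    _ ≤ ENNReal.ofReal (f a.1 a.2) * greenFn p b b :=
        mul_le_mul_right (ENNReal.sum_le_tsum _) _
end

section
/- Let the walk satisfy (H1), (H2) and (H3). Then the diagonal Green functions along the horizontal boundary row are uniformly bounded: there exists a finite constant M such that G((i,1),(i,1)) ≤ M for every integer i ≥ 1. -/
open Finset
open scoped ENNReal

/-- The cyclic list `p_{1,1}, p_{1,0}, p_{1,-1}, p_{0,-1}, p_{-1,-1}, p_{-1,0}, p_{-1,1},
p_{0,1}` of the eight jump probabilities, indexed by `Fin 8`. -/
def cyclicList (p : ℤ → ℤ → ℝ) : Fin 8 → ℝ :=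
  ![p 1 1, p 1 0, p 1 (-1), p 0 (-1), p (-1) (-1), p (-1) 0, p (-1) 1, p 0 1]

noncomputable def surv (p : ℤ → ℤ → ℝ) (a : ℤ × ℤ) (n : ℕ) : ℝ :=
  ∑ e : Fin n → (Finset.Icc ((-1, -1) : ℤ × ℤ) (1, 1)),
    if (∀ k : Fin n, 1 ≤ (a + ∑ l ∈ Finset.Iic k, (e l : ℤ × ℤ)).1 ∧
          1 ≤ (a + ∑ l ∈ Finset.Iic k, (e l : ℤ × ℤ)).2) then
      ∏ k : Fin n, p (e k : ℤ × ℤ).1 (e k : ℤ × ℤ).2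
    else 0

lemma Iic_castSucc' (n : ℕ) (j : Fin n) :
    Finset.Iic (Fin.castSucc j) = (Finset.Iic j).map Fin.castSuccEmb := by
  ext l
  simp only [Finset.mem_Iic, Finset.mem_map, Fin.coe_castSuccEmb]
  constructor
  · intro hl
    have hne : l ≠ Fin.last n := Fin.ne_last_of_lt (lt_of_le_of_lt hl (Fin.castSucc_lt_last j))
    obtain ⟨y, rfl⟩ := Fin.exists_castSucc_eq.mpr hne
    exact ⟨y, Fin.castSucc_le_castSucc_iff.mp hl, rfl⟩
  · rintro ⟨y, hy, rfl⟩
    exact Fin.castSucc_le_castSucc_iff.mpr hy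

lemma Iic_last' (n : ℕ) : Finset.Iic (Fin.last n) = Finset.univ := by
  ext l; simp [Fin.le_last]

lemma ite_add_ite_le {c1 c2 c3 : Prop} [Decidable c1] [Decidable c2] [Decidable c3] {V : ℝ}
    (hV : 0 ≤ V) (h13 : c1 → c3) (h23 : c2 → c3) (h12 : ¬(c1 ∧ c2)) :
    (if c1 then V else 0) + (if c2 then V else 0) ≤ if c3 then V else 0 := by
  by_cases h1 : c1
  · rw [if_pos h1, if_neg (fun h2 => h12 ⟨h1, h2⟩), add_zero, if_pos (h13 h1)]
  · rw [if_neg h1, zero_add]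
    by_cases h2 : c2
    · rw [if_pos h2, if_pos (h23 h2)]
    · rw [if_neg h2]; split_ifs; exacts [hV, le_rfl]

lemma ite_le_ite' {c1 c3 : Prop} [Decidable c1] [Decidable c3] {V : ℝ}
    (hV : 0 ≤ V) (h13 : c1 → c3) :
    (if c1 then V else 0) ≤ if c3 then V else 0 := by
  by_cases h1 : c1
  · rw [if_pos h1, if_pos (h13 h1)]
  · rw [if_neg h1]; split_ifs; exacts [hV, le_rfl]

lemma surv_succ_le (p : ℤ → ℤ → ℝ) (hp : ∀ i j, 0 ≤ p i j)
    (hsum1 : ∑ x : (Finset.Icc ((-1, -1) : ℤ × ℤ) (1, 1)), p (x : ℤ × ℤ).1 (x : ℤ × ℤ).2 = 1)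
    (a : ℤ × ℤ) (ha : a.2 = 1)
    (x₀ : (Finset.Icc ((-1, -1) : ℤ × ℤ) (1, 1))) (hx₀ : (x₀ : ℤ × ℤ).2 = -1) (n : ℕ) :
    surv p a (n + 1) + p (x₀ : ℤ × ℤ).1 (x₀ : ℤ × ℤ).2 * killedStep p n a a ≤ surv p a n := by
  classical
  have h1 : surv p a (n + 1) = ∑ x : (Finset.Icc ((-1, -1) : ℤ × ℤ) (1, 1)), ∑ g : Fin n → (Finset.Icc ((-1, -1) : ℤ × ℤ) (1, 1)),
      (if ((∀ k : Fin n, 1 ≤ (a + ∑ l ∈ Finset.Iic k, (g l : ℤ × ℤ)).1 ∧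
            1 ≤ (a + ∑ l ∈ Finset.Iic k, (g l : ℤ × ℤ)).2) ∧
          (1 ≤ (a + ((∑ l : Fin n, (g l : ℤ × ℤ)) + (x : ℤ × ℤ))).1 ∧
            1 ≤ (a + ((∑ l : Fin n, (g l : ℤ × ℤ)) + (x : ℤ × ℤ))).2))
        then (∏ k : Fin n, p (g k : ℤ × ℤ).1 (g k : ℤ × ℤ).2) * p (x : ℤ × ℤ).1 (x : ℤ × ℤ).2
        else 0) := by
    have e1 : ∀ (F : (Fin (n+1) → (Finset.Icc ((-1, -1) : ℤ × ℤ) (1, 1))) → ℝ), ∑ e, F e =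
        ∑ q : (Finset.Icc ((-1, -1) : ℤ × ℤ) (1, 1)) × (Fin n → (Finset.Icc ((-1, -1) : ℤ × ℤ) (1, 1))), F (Fin.snoc q.2 q.1) := fun F =>
      (Fintype.sum_equiv (Fin.snocEquiv fun _ => (Finset.Icc ((-1, -1) : ℤ × ℤ) (1, 1))) _ F (fun q => rfl)).symm
    rw [surv, e1, Fintype.sum_prod_type]
    refine Finset.sum_congr rfl fun x _ => Finset.sum_congr rfl fun g _ => ?_
    have hIic : ∀ (j : Fin n), (∑ l ∈ Finset.Iic (Fin.castSucc j),
        ((Fin.snoc g x : Fin (n+1) → _) l : ℤ × ℤ)) = ∑ l ∈ Finset.Iic j, (g l : ℤ × ℤ) := by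
      intro j
      rw [Iic_castSucc', Finset.sum_map]
      refine Finset.sum_congr rfl fun l _ => ?_
      rw [show (Fin.castSuccEmb l : Fin (n+1)) = Fin.castSucc l from
        congrFun Fin.coe_castSuccEmb l, Fin.snoc_castSucc]
    have hlast : (∑ l ∈ Finset.Iic (Fin.last n), ((Fin.snoc g x : Fin (n+1) → _) l : ℤ × ℤ))
        = (∑ l : Fin n, (g l : ℤ × ℤ)) + (x : ℤ × ℤ) := by
      rw [Iic_last', Fin.sum_univ_castSucc]
      simp
    simp only [Fin.forall_fin_succ', hIic, hlast, Fin.prod_univ_castSucc,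
      Fin.snoc_castSucc, Fin.snoc_last]
  have h2 : (∑ x : (Finset.Icc ((-1, -1) : ℤ × ℤ) (1, 1)), ∑ g : Fin n → (Finset.Icc ((-1, -1) : ℤ × ℤ) (1, 1)),
      (if (∀ k : Fin n, 1 ≤ (a + ∑ l ∈ Finset.Iic k, (g l : ℤ × ℤ)).1 ∧
            1 ≤ (a + ∑ l ∈ Finset.Iic k, (g l : ℤ × ℤ)).2)
        then (∏ k : Fin n, p (g k : ℤ × ℤ).1 (g k : ℤ × ℤ).2) * p (x : ℤ × ℤ).1 (x : ℤ × ℤ).2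
        else 0)) = surv p a n := by
    rw [Finset.sum_comm, surv]
    refine Finset.sum_congr rfl fun g _ => ?_
    by_cases hC : (∀ k : Fin n, 1 ≤ (a + ∑ l ∈ Finset.Iic k, (g l : ℤ × ℤ)).1 ∧
        1 ≤ (a + ∑ l ∈ Finset.Iic k, (g l : ℤ × ℤ)).2)
    · simp only [if_pos hC]
      rw [← Finset.mul_sum, hsum1, mul_one]
    · simp only [if_neg hC, Finset.sum_const_zero]
  have h3 : p (x₀ : ℤ × ℤ).1 (x₀ : ℤ × ℤ).2 * killedStep p n a a
      = ∑ g : Fin n → (Finset.Icc ((-1, -1) : ℤ × ℤ) (1, 1)),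
        (if (∀ k : Fin n, 1 ≤ (a + ∑ l ∈ Finset.Iic k, (g l : ℤ × ℤ)).1 ∧
              1 ≤ (a + ∑ l ∈ Finset.Iic k, (g l : ℤ × ℤ)).2) ∧
            a + (∑ l : Fin n, (g l : ℤ × ℤ)) = a
          then (∏ k : Fin n, p (g k : ℤ × ℤ).1 (g k : ℤ × ℤ).2) * p (x₀ : ℤ × ℤ).1 (x₀ : ℤ × ℤ).2
          else 0) := by
    rw [killedStep, Finset.mul_sum]
    refine Finset.sum_congr rfl fun g _ => ?_
    rw [mul_ite, mul_zero, mul_comm]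
  have hD : (∑ x : (Finset.Icc ((-1, -1) : ℤ × ℤ) (1, 1)), if x = x₀ then
      (∑ g : Fin n → (Finset.Icc ((-1, -1) : ℤ × ℤ) (1, 1)),
        (if (∀ k : Fin n, 1 ≤ (a + ∑ l ∈ Finset.Iic k, (g l : ℤ × ℤ)).1 ∧
              1 ≤ (a + ∑ l ∈ Finset.Iic k, (g l : ℤ × ℤ)).2) ∧
            a + (∑ l : Fin n, (g l : ℤ × ℤ)) = a
          then (∏ k : Fin n, p (g k : ℤ × ℤ).1 (g k : ℤ × ℤ).2) * p (x : ℤ × ℤ).1 (x : ℤ × ℤ).2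
          else 0)) else 0)
      = ∑ g : Fin n → (Finset.Icc ((-1, -1) : ℤ × ℤ) (1, 1)),
        (if (∀ k : Fin n, 1 ≤ (a + ∑ l ∈ Finset.Iic k, (g l : ℤ × ℤ)).1 ∧
              1 ≤ (a + ∑ l ∈ Finset.Iic k, (g l : ℤ × ℤ)).2) ∧
            a + (∑ l : Fin n, (g l : ℤ × ℤ)) = a
          then (∏ k : Fin n, p (g k : ℤ × ℤ).1 (g k : ℤ × ℤ).2) * p (x₀ : ℤ × ℤ).1 (x₀ : ℤ × ℤ).2
          else 0) := by
    rw [Finset.sum_ite_eq' Finset.univ x₀]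
    simp
  rw [h1, h3, ← hD, ← h2, ← Finset.sum_add_distrib]
  refine Finset.sum_le_sum fun x _ => ?_
  by_cases hx : x = x₀
  · subst hx
    rw [if_pos rfl, ← Finset.sum_add_distrib]
    refine Finset.sum_le_sum fun g _ => ?_
    have hV : 0 ≤ (∏ k : Fin n, p (g k : ℤ × ℤ).1 (g k : ℤ × ℤ).2) * p (x : ℤ × ℤ).1 (x : ℤ × ℤ).2 :=
      mul_nonneg (Finset.prod_nonneg fun k _ => hp _ _) (hp _ _)
    refine ite_add_ite_le hV (fun h => h.1) (fun h => h.1) ?_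
    rintro ⟨⟨-, -, hq2⟩, -, heq⟩
    rw [← add_assoc, heq, Prod.snd_add, ha, hx₀] at hq2
    norm_num at hq2
  · rw [if_neg hx, add_zero]
    refine Finset.sum_le_sum fun g _ => ?_
    have hV : 0 ≤ (∏ k : Fin n, p (g k : ℤ × ℤ).1 (g k : ℤ × ℤ).2) * p (x : ℤ × ℤ).1 (x : ℤ × ℤ).2 :=
      mul_nonneg (Finset.prod_nonneg fun k _ => hp _ _) (hp _ _)
    exact ite_le_ite' hV (fun h => h.1)

lemma surv_zero (p : ℤ → ℤ → ℝ) (a : ℤ × ℤ) : surv p a 0 = 1 := by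
  simp [surv]

lemma surv_nonneg (p : ℤ → ℤ → ℝ) (hp : ∀ i j, 0 ≤ p i j) (a : ℤ × ℤ) (n : ℕ) :
    0 ≤ surv p a n := by
  refine Finset.sum_nonneg fun e _ => ?_
  split
  · exact Finset.prod_nonneg fun k _ => hp _ _
  · exact le_refl 0

lemma killedStep_nonneg (p : ℤ → ℤ → ℝ) (hp : ∀ i j, 0 ≤ p i j) (n : ℕ) (a b : ℤ × ℤ) :
    0 ≤ killedStep p n a b := by
  refine Finset.sum_nonneg fun e _ => ?_
  split
  · exact Finset.prod_nonneg fun k _ => hp _ _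
  · exact le_refl 0

lemma partial_sum_bound (p : ℤ → ℤ → ℝ) (hp : ∀ i j, 0 ≤ p i j)
    (hsum1 : ∑ x : (Finset.Icc ((-1, -1) : ℤ × ℤ) (1, 1)), p (x : ℤ × ℤ).1 (x : ℤ × ℤ).2 = 1)
    (a : ℤ × ℤ) (ha : a.2 = 1)
    (x₀ : (Finset.Icc ((-1, -1) : ℤ × ℤ) (1, 1))) (hx₀ : (x₀ : ℤ × ℤ).2 = -1) (N : ℕ) :
    p (x₀ : ℤ × ℤ).1 (x₀ : ℤ × ℤ).2 * ∑ n ∈ Finset.range N, killedStep p n a a ≤ 1 := by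
  have main : ∀ N : ℕ,
      surv p a N + p (x₀ : ℤ × ℤ).1 (x₀ : ℤ × ℤ).2 * ∑ n ∈ Finset.range N, killedStep p n a a
        ≤ 1 := by
    intro N
    induction N with
    | zero => simp [surv_zero]
    | succ N ih =>
      have hstep := surv_succ_le p hp hsum1 a ha x₀ hx₀ N
      rw [Finset.sum_range_succ, mul_add]
      linarith
  have h := main N
  have h2 := surv_nonneg p hp a N
  linarith

theorem diagonal_green_functions_bounded (p : ℤ → ℤ → ℝ)
    -- (H1)
    (hp_nonneg : ∀ i j : ℤ, 0 ≤ p i j) (hp00 : p 0 0 = 0)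
    (hp_sum : ∑ i ∈ Finset.Icc (-1 : ℤ) 1, ∑ j ∈ Finset.Icc (-1 : ℤ) 1, p i j = 1)
    -- (H2)
    (hH2 : ∀ k : Fin 8, ¬ (cyclicList p k = 0 ∧ cyclicList p (k + 1) = 0 ∧
      cyclicList p (k + 2) = 0))
    -- (H3)
    (hH3x : ∑ i ∈ Finset.Icc (-1 : ℤ) 1, ∑ j ∈ Finset.Icc (-1 : ℤ) 1, (i : ℝ) * p i j = 0)
    (hH3y : ∑ i ∈ Finset.Icc (-1 : ℤ) 1, ∑ j ∈ Finset.Icc (-1 : ℤ) 1, (j : ℝ) * p i j = 0) :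
    ∃ M : ℝ≥0∞, M < ⊤ ∧ ∀ i : ℤ, 1 ≤ i → greenFn p (i, 1) (i, 1) ≤ M := by
  classical
  have hsum1 : ∑ x : (Finset.Icc ((-1, -1) : ℤ × ℤ) (1, 1)), p (x : ℤ × ℤ).1 (x : ℤ × ℤ).2 = 1 := by
    rw [Finset.sum_coe_sort (f := fun x : ℤ × ℤ => p x.1 x.2)]
    rw [Finset.Icc_prod_def, Finset.sum_product]
    exact hp_sum
  have h2' := hH2 2
  have e2 : cyclicList p 2 = p 1 (-1) := rfl
  have e3 : cyclicList p (2 + 1) = p 0 (-1) := rfl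
  have e4 : cyclicList p (2 + 2) = p (-1) (-1) := rfl
  rw [e2, e3, e4] at h2'
  obtain ⟨x₀, hx₀2, hx₀pos⟩ : ∃ x₀ : (Finset.Icc ((-1, -1) : ℤ × ℤ) (1, 1)),
      (x₀ : ℤ × ℤ).2 = -1 ∧ 0 < p (x₀ : ℤ × ℤ).1 (x₀ : ℤ × ℤ).2 := by
    rcases (hp_nonneg 1 (-1)).lt_or_eq with h | h
    · exact ⟨⟨(1, -1), by decide⟩, rfl, h⟩
    rcases (hp_nonneg 0 (-1)).lt_or_eq with h' | h'
    · exact ⟨⟨(0, -1), by decide⟩, rfl, h'⟩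
    rcases (hp_nonneg (-1) (-1)).lt_or_eq with h'' | h''
    · exact ⟨⟨(-1, -1), by decide⟩, rfl, h''⟩
    · exact absurd ⟨h.symm, h'.symm, h''.symm⟩ h2'
  set c := p (x₀ : ℤ × ℤ).1 (x₀ : ℤ × ℤ).2 with hc
  refine ⟨ENNReal.ofReal (1 / c), ENNReal.ofReal_lt_top, fun i hi => ?_⟩
  rw [greenFn, ENNReal.tsum_eq_iSup_sum]
  refine iSup_le fun s => ?_
  obtain ⟨N, hN⟩ := s.exists_nat_subset_range
  calc ∑ n ∈ s, ENNReal.ofReal (killedStep p n (i, 1) (i, 1))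
      ≤ ∑ n ∈ Finset.range N, ENNReal.ofReal (killedStep p n (i, 1) (i, 1)) :=
        Finset.sum_le_sum_of_subset hN
    _ = ENNReal.ofReal (∑ n ∈ Finset.range N, killedStep p n (i, 1) (i, 1)) :=
        (ENNReal.ofReal_sum_of_nonneg fun n _ => killedStep_nonneg p hp_nonneg n _ _).symm
    _ ≤ ENNReal.ofReal (1 / c) := by
        refine ENNReal.ofReal_le_ofReal ?_
        rw [le_div_iff₀ hx₀pos, mul_comm]
        exact partial_sum_bound p hp_nonneg hsum1 (i, 1) rfl x₀ hx₀2 N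
end

section
/- Let U ⊆ C be a bounded, open, connected set which is symmetric under complex conjugation (z ∈ U if and only if z̄ ∈ U). Let h : C → C be continuous on the closure of U, complex-differentiable (holomorphic) on U, and satisfy h(z) = h(z̄) for every z on the boundary (frontier) of U. Then h is constant on the closure of U. -/
open Complex

/-- If a holomorphic function on a bounded set has zero real part on the frontier,
it has zero real part on the closure. -/
lemma re_zero_of_frontier {U : Set ℂ} (hU_bounded : Bornology.IsBounded U)
    {f : ℂ → ℂ} (hf : DiffContOnCl ℂ f U)
    (hb : ∀ z ∈ frontier U, (f z).re = 0) :
    ∀ z ∈ closure U, (f z).re = 0 := by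
  intro z hz
  have hexp : DiffContOnCl ℂ (fun w => Complex.exp (f w)) U :=
    ⟨(Complex.differentiable_exp.comp_differentiableOn hf.differentiableOn),
     Complex.continuous_exp.comp_continuousOn hf.continuousOn⟩
  have hexp' : DiffContOnCl ℂ (fun w => Complex.exp (-(f w))) U :=
    ⟨(Complex.differentiable_exp.comp_differentiableOn hf.differentiableOn.neg),
     Complex.continuous_exp.comp_continuousOn hf.continuousOn.neg⟩
  have h1 : ‖Complex.exp (f z)‖ ≤ 1 := by
    refine Complex.norm_le_of_forall_mem_frontier_norm_le hU_bounded hexp ?_ hz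
    intro w hw
    simp [Complex.norm_exp, hb w hw]
  have h2 : ‖Complex.exp (-(f z))‖ ≤ 1 := by
    refine Complex.norm_le_of_forall_mem_frontier_norm_le hU_bounded hexp' ?_ hz
    intro w hw
    simp [Complex.norm_exp, hb w hw]
  rw [Complex.norm_exp] at h1 h2
  simp only [Complex.neg_re] at h2
  rw [show (1:ℝ) = Real.exp 0 by simp] at h1 h2
  have e1 := Real.exp_le_exp.1 h1
  have e2 := Real.exp_le_exp.1 h2
  linarith

/-- A nonempty open subset of ℂ cannot consist only of numbers with zero real part. -/
lemma not_isOpen_subset_re_zero {s : Set ℂ} (hs : s.Nonempty) (hre : ∀ w ∈ s, w.re = 0) :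
    ¬ IsOpen s := by
  intro hopen
  obtain ⟨w, hw⟩ := hs
  obtain ⟨r, hr, hball⟩ := Metric.isOpen_iff.1 hopen w hw
  have hmem : w + (r/2 : ℝ) ∈ s := by
    apply hball
    simp only [Metric.mem_ball, dist_eq_norm]
    have h0 : w + (r/2:ℝ) - w = ((r/2:ℝ) : ℂ) := by ring
    rw [h0, Complex.norm_real, Real.norm_eq_abs, abs_of_pos (by linarith : (0:ℝ) < r/2)]
    linarith
  have h1 := hre _ hmem
  have h2 := hre w hw
  simp [Complex.add_re, h2] at h1
  linarith

theorem constant_from_conjugation_boundary_condition (U : Set ℂ)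
    (hU_bounded : Bornology.IsBounded U) (hU_open : IsOpen U) (hU_conn : IsConnected U)
    (hU_sym : ∀ z : ℂ, z ∈ U ↔ (starRingEnd ℂ) z ∈ U)
    (h : ℂ → ℂ)
    (h_cont : ContinuousOn h (closure U))
    (h_diff : DifferentiableOn ℂ h U)
    (h_bdry : ∀ z ∈ frontier U, h z = h ((starRingEnd ℂ) z)) :
    ∃ c : ℂ, ∀ z ∈ closure U, h z = c := by
  classical
  set e : ℂ ≃ₜ ℂ := Complex.conjCLE.toHomeomorph with he
  have he_apply : ∀ z, e z = (starRingEnd ℂ) z := fun z => rfl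
  have hpre : e ⁻¹' U = U := by
    ext z; simp only [Set.mem_preimage, he_apply]; exact (hU_sym z).symm
  have hclpre : e ⁻¹' closure U = closure U := by
    rw [e.preimage_closure, hpre]
  have hfrpre : e ⁻¹' frontier U = frontier U := by
    rw [e.preimage_frontier, hpre]
  have hclmem : ∀ z ∈ closure U, (starRingEnd ℂ) z ∈ closure U := by
    intro z hz
    have : z ∈ e ⁻¹' closure U := by rw [hclpre]; exact hz
    exact this
  have hfr : ∀ z ∈ frontier U, (starRingEnd ℂ) z ∈ frontier U := by
    intro z hz
    have : z ∈ e ⁻¹' frontier U := by rw [hfrpre]; exact hz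
    exact this
  have hmemU : ∀ z ∈ U, (starRingEnd ℂ) z ∈ U := fun z hz => (hU_sym z).1 hz
  -- define φ z = conj (h (conj z)), holomorphic on U
  set φ : ℂ → ℂ := fun z => (starRingEnd ℂ) (h ((starRingEnd ℂ) z)) with hφdef
  have hφ_diff : DifferentiableOn ℂ φ U := by
    intro z hz
    have hz' : (starRingEnd ℂ) z ∈ U := hmemU z hz
    have hd : HasDerivAt h (deriv h ((starRingEnd ℂ) z)) ((starRingEnd ℂ) z) :=
      (h_diff.differentiableAt (hU_open.mem_nhds hz')).hasDerivAt
    set d : ℂ := deriv h ((starRingEnd ℂ) z) with hddef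
    have hA : HasFDerivAt h ((ContinuousLinearMap.smulRight (1 : ℂ →L[ℂ] ℂ) d).restrictScalars ℝ)
        ((starRingEnd ℂ) z) := hd.hasFDerivAt.restrictScalars ℝ
    have hC : HasFDerivAt (fun w : ℂ => (starRingEnd ℂ) w)
        (Complex.conjCLE : ℂ →L[ℝ] ℂ) z := Complex.conjCLE.hasFDerivAt
    have hC' : HasFDerivAt (fun w : ℂ => (starRingEnd ℂ) w)
        (Complex.conjCLE : ℂ →L[ℝ] ℂ) (h ((starRingEnd ℂ) z)) := Complex.conjCLE.hasFDerivAt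
    have hcomp : HasFDerivAt φ
        ((Complex.conjCLE : ℂ →L[ℝ] ℂ).comp
          (((ContinuousLinearMap.smulRight (1 : ℂ →L[ℂ] ℂ) d).restrictScalars ℝ).comp
            (Complex.conjCLE : ℂ →L[ℝ] ℂ))) z :=
      hC'.comp z (hA.comp z hC)
    have hB : HasFDerivAt φ (ContinuousLinearMap.smulRight (1 : ℂ →L[ℂ] ℂ)
        ((starRingEnd ℂ) d)) z := by
      apply hasFDerivAt_of_restrictScalars ℝ hcomp
      refine ContinuousLinearMap.ext fun w => ?_
      simp [Complex.conjCLE_apply, map_mul, mul_comm]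
    exact hB.differentiableAt.differentiableWithinAt
  have hφ_cont : ContinuousOn φ (closure U) := by
    apply Complex.continuous_conj.comp_continuousOn
    exact h_cont.comp Complex.continuous_conj.continuousOn hclmem
  -- g = h - φ has re = 0 on frontier; I * (h + φ) has re = 0 on frontier
  have hbfr : ∀ z ∈ frontier U, h ((starRingEnd ℂ) z) = h z := by
    intro z hz
    have := h_bdry ((starRingEnd ℂ) z) (hfr z hz)
    rw [Complex.conj_conj] at this
    exact this
  have hg_re : ∀ z ∈ closure U, (h z - φ z).re = 0 := by
    apply re_zero_of_frontier hU_bounded ⟨h_diff.sub hφ_diff, h_cont.sub hφ_cont⟩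
    intro z hz
    simp only [hφdef, Pi.sub_apply, hbfr z hz, Complex.sub_re, Complex.conj_re]
    ring
  have hψ_im : ∀ z ∈ closure U, (Complex.I * (h z + φ z)).re = 0 := by
    apply re_zero_of_frontier hU_bounded
    · exact ⟨(h_diff.add hφ_diff).const_smul Complex.I |>.congr (fun z _ => by simp [smul_eq_mul]),
        ((h_cont.add hφ_cont).const_smul Complex.I).congr (fun z _ => by simp [smul_eq_mul])⟩
    · intro z hz
      simp only [hφdef, hbfr z hz, Complex.mul_re, Complex.I_re, Complex.I_im, Complex.add_im,
        Complex.conj_im, Complex.add_re, Complex.conj_re]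
      ring
  -- constancy of g on U via open mapping theorem
  have hUsub : U ⊆ closure U := subset_closure
  have hUne : U.Nonempty := hU_conn.nonempty
  have hg_an : AnalyticOnNhd ℂ (fun z => h z - φ z) U :=
    (h_diff.sub hφ_diff).analyticOnNhd hU_open
  have hg_const : ∃ c1, ∀ z ∈ U, h z - φ z = c1 := by
    rcases hg_an.is_constant_or_isOpen hU_conn.isPreconnected with hc | hop
    · exact hc
    · exfalso
      refine not_isOpen_subset_re_zero (hUne.image _) ?_ (hop U le_rfl hU_open)
      rintro w ⟨z, hz, rfl⟩
      exact hg_re z (hUsub hz)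
  have hψ_an : AnalyticOnNhd ℂ (fun z => Complex.I * (h z + φ z)) U := by
    apply DifferentiableOn.analyticOnNhd _ hU_open
    exact ((h_diff.add hφ_diff).const_smul Complex.I).congr (fun z _ => by simp [smul_eq_mul])
  have hψ_const : ∃ c2, ∀ z ∈ U, Complex.I * (h z + φ z) = c2 := by
    rcases hψ_an.is_constant_or_isOpen hU_conn.isPreconnected with hc | hop
    · exact hc
    · exfalso
      refine not_isOpen_subset_re_zero (hUne.image _) ?_ (hop U le_rfl hU_open)
      rintro w ⟨z, hz, rfl⟩
      exact hψ_im z (hUsub hz)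
  obtain ⟨c1, hc1⟩ := hg_const
  obtain ⟨c2, hc2⟩ := hψ_const
  set c : ℂ := (c1 + (-Complex.I) * c2) / 2 with hcdef
  have hU_eq : ∀ z ∈ U, h z = c := by
    intro z hz
    have e1 := hc1 z hz
    have e2 := hc2 z hz
    have e3 : h z + φ z = (-Complex.I) * c2 := by
      rw [← e2]; ring_nf; rw [Complex.I_sq]; ring
    rw [hcdef, ← e1, ← e3]; ring
  refine ⟨c, fun z hz => ?_⟩
  have hne : (nhdsWithin z U).NeBot := mem_closure_iff_nhdsWithin_neBot.1 hz
  have ht1 : Filter.Tendsto h (nhdsWithin z U) (nhds (h z)) :=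
    (h_cont z hz).mono hUsub
  have ht2 : Filter.Tendsto h (nhdsWithin z U) (nhds c) := by
    apply Filter.Tendsto.congr' _ tendsto_const_nhds
    filter_upwards [self_mem_nhdsWithin] with w hw
    exact (hU_eq w hw).symm
  exact tendsto_nhds_unique ht1 ht2
end

section
/- Let the walk satisfy (H1), (H2) and (H3). Define the real polynomials α(x) = p_{−1,−1}x² + p_{0,−1}x + p_{1,−1}, β(x) = p_{−1,0}x² − x + p_{1,0}, γ(x) = p_{−1,1}x² + p_{0,1}x + p_{1,1}, and the discriminant δ(x) = β(x)² − 4·α(x)·γ(x). Then x = 1 is a root of δ of multiplicity exactly two: δ(1) = 0, δ'(1) = 0, and δ''(1) < 0. -/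
open Finset Polynomial

/-- `α(x) = p_{-1,-1} x² + p_{0,-1} x + p_{1,-1}`. -/
noncomputable def alphaPoly (p : ℤ → ℤ → ℝ) : Polynomial ℝ :=
  Polynomial.C (p (-1) (-1)) * Polynomial.X ^ 2 + Polynomial.C (p 0 (-1)) * Polynomial.X +
    Polynomial.C (p 1 (-1))

/-- `β(x) = p_{-1,0} x² − x + p_{1,0}`. -/
noncomputable def betaPoly (p : ℤ → ℤ → ℝ) : Polynomial ℝ :=
  Polynomial.C (p (-1) 0) * Polynomial.X ^ 2 - Polynomial.X + Polynomial.C (p 1 0)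

/-- `γ(x) = p_{-1,1} x² + p_{0,1} x + p_{1,1}`. -/
noncomputable def gammaPoly (p : ℤ → ℤ → ℝ) : Polynomial ℝ :=
  Polynomial.C (p (-1) 1) * Polynomial.X ^ 2 + Polynomial.C (p 0 1) * Polynomial.X +
    Polynomial.C (p 1 1)

/-- The discriminant `δ(x) = β(x)² − 4 α(x) γ(x)`. -/
noncomputable def deltaPoly (p : ℤ → ℤ → ℝ) : Polynomial ℝ :=
  betaPoly p ^ 2 - 4 * alphaPoly p * gammaPoly p

lemma pos_of_not_all_zero' {x y z : ℝ} (hx : 0 ≤ x) (hy : 0 ≤ y) (hz : 0 ≤ z)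
    (h : ¬ (x = 0 ∧ y = 0 ∧ z = 0)) : 0 < x ∨ 0 < y ∨ 0 < z := by
  rcases hx.lt_or_eq with h1 | h1
  · exact Or.inl h1
  rcases hy.lt_or_eq with h2 | h2
  · exact Or.inr (Or.inl h2)
  rcases hz.lt_or_eq with h3 | h3
  · exact Or.inr (Or.inr h3)
  exact absurd ⟨h1.symm, h2.symm, h3.symm⟩ h

lemma key_pos' (u v B D : ℝ) (hu : 0 ≤ u) (hv : 0 ≤ v) (hB : 0 ≤ B) (hD : 0 ≤ D)
    (h0 : 0 < u ∨ 0 < D ∨ 0 < v) (h1 : 0 < D ∨ 0 < v ∨ 0 < B)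
    (h2 : 0 < v ∨ 0 < B ∨ 0 < u) (h3 : 0 < B ∨ 0 < u ∨ 0 < D) :
    0 < 4*u*v + (u+v)*(B+D) + D*B := by
  rcases h0 with h0 | h0 | h0
  · rcases h1 with h1 | h1 | h1 <;>
      nlinarith [mul_pos h0 h1, mul_nonneg hu hv, mul_nonneg hu hB, mul_nonneg hu hD,
        mul_nonneg hv hB, mul_nonneg hv hD, mul_nonneg hB hD]
  · rcases h2 with h2 | h2 | h2 <;>
      nlinarith [mul_pos h0 h2, mul_nonneg hu hv, mul_nonneg hu hB, mul_nonneg hu hD,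
        mul_nonneg hv hB, mul_nonneg hv hD, mul_nonneg hB hD]
  · rcases h3 with h3 | h3 | h3 <;>
      nlinarith [mul_pos h0 h3, mul_nonneg hu hv, mul_nonneg hu hB, mul_nonneg hu hD,
        mul_nonneg hv hB, mul_nonneg hv hD, mul_nonneg hB hD]

theorem one_is_double_root_of_discriminant (p : ℤ → ℤ → ℝ)
    -- (H1)
    (hp_nonneg : ∀ i j : ℤ, 0 ≤ p i j) (hp00 : p 0 0 = 0)
    (hp_sum : ∑ i ∈ Finset.Icc (-1 : ℤ) 1, ∑ j ∈ Finset.Icc (-1 : ℤ) 1, p i j = 1)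
    -- (H2)
    (hH2 : ∀ k : Fin 8, ¬ (cyclicList p k = 0 ∧ cyclicList p (k + 1) = 0 ∧
      cyclicList p (k + 2) = 0))
    -- (H3)
    (hH3x : ∑ i ∈ Finset.Icc (-1 : ℤ) 1, ∑ j ∈ Finset.Icc (-1 : ℤ) 1, (i : ℝ) * p i j = 0)
    (hH3y : ∑ i ∈ Finset.Icc (-1 : ℤ) 1, ∑ j ∈ Finset.Icc (-1 : ℤ) 1, (j : ℝ) * p i j = 0) :
    (deltaPoly p).eval 1 = 0 ∧ (Polynomial.derivative (deltaPoly p)).eval 1 = 0 ∧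
      (Polynomial.derivative (Polynomial.derivative (deltaPoly p))).eval 1 < 0 := by
  have hIcc : Finset.Icc (-1 : ℤ) 1 = {-1, 0, 1} := by decide
  rw [hIcc] at hp_sum hH3x hH3y
  simp [Finset.sum_insert, Finset.mem_insert, hp00] at hp_sum hH3x hH3y
  set a := p (-1) (-1) with ha
  set b := p 0 (-1) with hb
  set c := p 1 (-1) with hc
  set d := p (-1) 0 with hd
  set e := p 1 0 with he
  set f := p (-1) 1 with hf
  set g := p 0 1 with hg
  set h := p 1 1 with hh
  have hS : a + d + f + b + g + (c + e + h) = 1 := by linarith [hp_sum]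
  have hX : c + e + h - (a + d + f) = 0 := by linarith [hH3x]
  have hY : f + g + h - (a + b + c) = 0 := by linarith [hH3y]
  refine ⟨?_, ?_, ?_⟩
  · have ev : (deltaPoly p).eval 1 = (d + e - 1)^2 - 4*(a + b + c)*(f + g + h) := by
      simp [deltaPoly, alphaPoly, betaPoly, gammaPoly, ← ha, ← hb, ← hc, ← hd, ← he, ← hf,
        ← hg, ← hh]
      ring
    rw [ev]
    linear_combination (-1 - 2*a - 2*b - 2*c + d + e) * hS + (1 - 2*a - 2*b - 2*c - d - e) * hY
  · have ev : (Polynomial.derivative (deltaPoly p)).eval 1 =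
        2*(d + e - 1)*(2*d - 1)
        - 4*((2*a + b)*(f + g + h) + (a + b + c)*(2*f + g)) := by
      simp [deltaPoly, alphaPoly, betaPoly, gammaPoly, derivative_mul, derivative_pow,
        ← ha, ← hb, ← hc, ← hd, ← he, ← hf, ← hg, ← hh]
      ring
    rw [ev]
    linear_combination (-2 - 4*a - 4*b - 4*c + 4*d) * hS + (4*a + 4*b + 4*c) * hX +
      (2 - 8*a - 4*b - 4*d) * hY
  · have ev : (Polynomial.derivative (Polynomial.derivative (deltaPoly p))).eval 1 =
        2*(2*d - 1)^2 + 2*(d + e - 1)*(2*d)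
        - 4*(2*a*(f + g + h) + 2*(2*a + b)*(2*f + g) + (a + b + c)*(2*f)) := by
      simp [deltaPoly, alphaPoly, betaPoly, gammaPoly, derivative_mul, derivative_pow,
        ← ha, ← hb, ← hc, ← hd, ← he, ← hf, ← hg, ← hh]
      ring
    have ev2 : (Polynomial.derivative (Polynomial.derivative (deltaPoly p))).eval 1 =
        2*(a + h - c - f)^2 - 2*(a + c + d + e + f + h)*(a + b + c + f + g + h) := by
      rw [ev]
      linear_combination (-2 - 4*a - 4*b - 4*c + 10*d - 2*e) * hS +
        (12*a + 10*b + 8*c - 2*d + 2*e + 4*f + 2*g) * hX +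
        (2 - 16*a - 4*b + 4*c - 6*d + 2*e + 4*f) * hY
    rw [ev2]
    have w0 := pos_of_not_all_zero' (hp_nonneg 1 1) (hp_nonneg 1 0) (hp_nonneg 1 (-1))
      (by simpa [cyclicList] using hH2 0)
    have w1 := pos_of_not_all_zero' (hp_nonneg 1 0) (hp_nonneg 1 (-1)) (hp_nonneg 0 (-1))
      (by simpa [cyclicList] using hH2 1)
    have w2 := pos_of_not_all_zero' (hp_nonneg 1 (-1)) (hp_nonneg 0 (-1))
      (hp_nonneg (-1) (-1)) (by simpa [cyclicList] using hH2 2)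
    have w3 := pos_of_not_all_zero' (hp_nonneg 0 (-1)) (hp_nonneg (-1) (-1))
      (hp_nonneg (-1) 0) (by simpa [cyclicList] using hH2 3)
    rw [← hh, ← he, ← hc] at w0
    rw [← he, ← hc, ← hb] at w1
    rw [← hc, ← hb, ← ha] at w2
    rw [← hb, ← ha, ← hd] at w3
    have na : 0 ≤ a := by rw [ha]; exact hp_nonneg _ _
    have nb : 0 ≤ b := by rw [hb]; exact hp_nonneg _ _
    have nc : 0 ≤ c := by rw [hc]; exact hp_nonneg _ _
    have nd : 0 ≤ d := by rw [hd]; exact hp_nonneg _ _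
    have ne' : 0 ≤ e := by rw [he]; exact hp_nonneg _ _
    have nf : 0 ≤ f := by rw [hf]; exact hp_nonneg _ _
    have ng : 0 ≤ g := by rw [hg]; exact hp_nonneg _ _
    have nh : 0 ≤ h := by rw [hh]; exact hp_nonneg _ _
    have h0 : 0 < a + h ∨ 0 < d + e ∨ 0 < c + f := by
      rcases w0 with H | H | H
      · exact Or.inl (by linarith)
      · exact Or.inr (Or.inl (by linarith))
      · exact Or.inr (Or.inr (by linarith))
    have h1 : 0 < d + e ∨ 0 < c + f ∨ 0 < b + g := by
      rcases w1 with H | H | H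
      · exact Or.inl (by linarith)
      · exact Or.inr (Or.inl (by linarith))
      · exact Or.inr (Or.inr (by linarith))
    have h2 : 0 < c + f ∨ 0 < b + g ∨ 0 < a + h := by
      rcases w2 with H | H | H
      · exact Or.inl (by linarith)
      · exact Or.inr (Or.inl (by linarith))
      · exact Or.inr (Or.inr (by linarith))
    have h3 : 0 < b + g ∨ 0 < a + h ∨ 0 < d + e := by
      rcases w3 with H | H | H
      · exact Or.inl (by linarith)
      · exact Or.inr (Or.inl (by linarith))
      · exact Or.inr (Or.inr (by linarith))
    have key := key_pos' (a + h) (c + f) (b + g) (d + e)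
      (by linarith) (by linarith) (by linarith) (by linarith) h0 h1 h2 h3
    nlinarith [key]
end

section
/- Let the walk satisfy (H1) and (H2). Then the strict Cauchy–Schwarz inequality (Σ_{-1≤i,j≤1} i·j·p_{i,j})² < (Σ_{-1≤i,j≤1} i²·p_{i,j})·(Σ_{-1≤i,j≤1} j²·p_{i,j}) holds, and both factors on the right-hand side are strictly positive; consequently the angle θ = arccos( −(Σ i·j·p_{i,j}) / sqrt( (Σ i²·p_{i,j})·(Σ j²·p_{i,j}) ) ) is well defined and lies in the open interval (0, π). -/
open Finset

/-- The angle `θ = arccos( -Σ i·j·p_{i,j} / sqrt( (Σ i²·p_{i,j})·(Σ j²·p_{i,j}) ) )`. -/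
noncomputable def walkAngle (p : ℤ → ℤ → ℝ) : ℝ :=
  Real.arccos
    (-(∑ i ∈ Finset.Icc (-1 : ℤ) 1, ∑ j ∈ Finset.Icc (-1 : ℤ) 1, (i : ℝ) * (j : ℝ) * p i j) /
      Real.sqrt
        ((∑ i ∈ Finset.Icc (-1 : ℤ) 1, ∑ j ∈ Finset.Icc (-1 : ℤ) 1, (i : ℝ) ^ 2 * p i j) *
          (∑ i ∈ Finset.Icc (-1 : ℤ) 1, ∑ j ∈ Finset.Icc (-1 : ℤ) 1, (j : ℝ) ^ 2 * p i j)))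

lemma key_ineq (a b c d e f g h : ℝ)
    (ha : 0 ≤ a) (hb : 0 ≤ b) (hc : 0 ≤ c) (hd : 0 ≤ d) (he : 0 ≤ e)
    (hf : 0 ≤ f) (hg : 0 ≤ g) (hh : 0 ≤ h)
    (t0 : 0 < a + b + c) (t1 : 0 < b + c + d) (t2 : 0 < c + d + e)
    (t3 : 0 < d + e + f) (t4 : 0 < e + f + g) (t5 : 0 < f + g + h)
    (t6 : 0 < g + h + a) (t7 : 0 < h + a + b) :
    (a - c + e - g) ^ 2 < (a + b + c + e + f + g) * (a + c + d + e + g + h) := by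
  rcases eq_or_lt_of_le (by linarith : (0:ℝ) ≤ a + e) with hae | hae
  · have ha0 : a = 0 := by linarith
    have he0 : e = 0 := by linarith
    subst ha0; subst he0
    rcases eq_or_lt_of_le (by linarith : (0:ℝ) ≤ c + g) with hcg | hcg
    · have hc0 : c = 0 := by linarith
      have hg0 : g = 0 := by linarith
      subst hc0; subst hg0
      have hb0 : 0 < b := by linarith
      have hd0 : 0 < d := by linarith
      nlinarith [mul_pos hb0 hd0, mul_nonneg hb hh, mul_nonneg hf hd, mul_nonneg hf hh]
    · have hbh : 0 < h + b := by linarith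
      nlinarith [mul_pos hcg hbh, mul_nonneg (by linarith : (0:ℝ) ≤ c+g) (by linarith : (0:ℝ) ≤ d+f),
        mul_nonneg (by linarith : (0:ℝ) ≤ b+f) (by linarith : (0:ℝ) ≤ d+h)]
  · rcases eq_or_lt_of_le (by linarith : (0:ℝ) ≤ c + g) with hcg | hcg
    · have hc0 : c = 0 := by linarith
      have hg0 : g = 0 := by linarith
      subst hc0; subst hg0
      have hbd : 0 < b + d := by linarith
      nlinarith [mul_pos hae hbd, mul_nonneg (by linarith : (0:ℝ) ≤ a+e) (by linarith : (0:ℝ) ≤ f+h),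
        mul_nonneg (by linarith : (0:ℝ) ≤ b+f) (by linarith : (0:ℝ) ≤ d+h)]
    · nlinarith [mul_pos hae hcg,
        mul_nonneg (by linarith : (0:ℝ) ≤ a+c+e+g) (by linarith : (0:ℝ) ≤ b+d+f+h),
        mul_nonneg (by linarith : (0:ℝ) ≤ b+f) (by linarith : (0:ℝ) ≤ d+h)]

lemma triple_pos (x y z : ℝ) (hx : 0 ≤ x) (hy : 0 ≤ y) (hz : 0 ≤ z)
    (hne : ¬ (x = 0 ∧ y = 0 ∧ z = 0)) : 0 < x + y + z := by
  by_contra hcon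
  push_neg at hcon
  exact hne ⟨by linarith, by linarith, by linarith⟩

set_option maxHeartbeats 1000000 in
theorem strict_cauchy_schwarz_and_angle (p : ℤ → ℤ → ℝ)
    -- (H1)
    (hp_nonneg : ∀ i j : ℤ, 0 ≤ p i j) (hp00 : p 0 0 = 0)
    (hp_sum : ∑ i ∈ Finset.Icc (-1 : ℤ) 1, ∑ j ∈ Finset.Icc (-1 : ℤ) 1, p i j = 1)
    -- (H2)
    (hH2 : ∀ k : Fin 8, ¬ (cyclicList p k = 0 ∧ cyclicList p (k + 1) = 0 ∧
      cyclicList p (k + 2) = 0)) :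
    (∑ i ∈ Finset.Icc (-1 : ℤ) 1, ∑ j ∈ Finset.Icc (-1 : ℤ) 1, (i : ℝ) * (j : ℝ) * p i j) ^ 2 <
        (∑ i ∈ Finset.Icc (-1 : ℤ) 1, ∑ j ∈ Finset.Icc (-1 : ℤ) 1, (i : ℝ) ^ 2 * p i j) *
          (∑ i ∈ Finset.Icc (-1 : ℤ) 1, ∑ j ∈ Finset.Icc (-1 : ℤ) 1, (j : ℝ) ^ 2 * p i j) ∧
      0 < ∑ i ∈ Finset.Icc (-1 : ℤ) 1, ∑ j ∈ Finset.Icc (-1 : ℤ) 1, (i : ℝ) ^ 2 * p i j ∧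
      0 < ∑ i ∈ Finset.Icc (-1 : ℤ) 1, ∑ j ∈ Finset.Icc (-1 : ℤ) 1, (j : ℝ) ^ 2 * p i j ∧
      0 < walkAngle p ∧ walkAngle p < Real.pi := by
  have hIcc : Finset.Icc (-1:ℤ) 1 = {-1,0,1} := by decide
  set a := p 1 1 with hA
  set b := p 1 0 with hB
  set c := p 1 (-1) with hC
  set d := p 0 (-1) with hD
  set e := p (-1) (-1) with hE
  set f := p (-1) 0 with hF
  set g := p (-1) 1 with hG
  set h := p 0 1 with hH
  have ha := hp_nonneg 1 1
  have hb := hp_nonneg 1 0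
  have hc := hp_nonneg 1 (-1)
  have hd := hp_nonneg 0 (-1)
  have he := hp_nonneg (-1) (-1)
  have hf := hp_nonneg (-1) 0
  have hg := hp_nonneg (-1) 1
  have hh := hp_nonneg 0 1
  have h0 := hH2 0
  have h1 := hH2 1
  have h2 := hH2 2
  have h3 := hH2 3
  have h4 := hH2 4
  have h5 := hH2 5
  have h6 := hH2 6
  have h7 := hH2 7
  simp only [cyclicList, show (0:Fin 8)+1 = 1 by decide, show (0:Fin 8)+2 = 2 by decide,
    show (1:Fin 8)+1 = 2 by decide, show (1:Fin 8)+2 = 3 by decide,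
    show (2:Fin 8)+1 = 3 by decide, show (2:Fin 8)+2 = 4 by decide,
    show (3:Fin 8)+1 = 4 by decide, show (3:Fin 8)+2 = 5 by decide,
    show (4:Fin 8)+1 = 5 by decide, show (4:Fin 8)+2 = 6 by decide,
    show (5:Fin 8)+1 = 6 by decide, show (5:Fin 8)+2 = 7 by decide,
    show (6:Fin 8)+1 = 7 by decide, show (6:Fin 8)+2 = 0 by decide,
    show (7:Fin 8)+1 = 0 by decide, show (7:Fin 8)+2 = 1 by decide] at h0 h1 h2 h3 h4 h5 h6 h7
  simp only [Matrix.cons_val_zero, Matrix.cons_val_one, Matrix.head_cons, Fin.isValue,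
    Matrix.cons_val_succ] at h0 h1 h2 h3 h4 h5 h6 h7
  have t0 := triple_pos _ _ _ ha hb hc h0
  have t1 := triple_pos _ _ _ hb hc hd h1
  have t2 := triple_pos _ _ _ hc hd he h2
  have t3 := triple_pos _ _ _ hd he hf h3
  have t4 := triple_pos _ _ _ he hf hg h4
  have t5 := triple_pos _ _ _ hf hg hh h5
  have t6 := triple_pos _ _ _ hg hh ha h6
  have t7 := triple_pos _ _ _ hh ha hb h7
  have hM : (∑ i ∈ Finset.Icc (-1 : ℤ) 1, ∑ j ∈ Finset.Icc (-1 : ℤ) 1,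
      (i : ℝ) * (j : ℝ) * p i j) = a - c + e - g := by
    simp [hIcc]; ring
  have hX : (∑ i ∈ Finset.Icc (-1 : ℤ) 1, ∑ j ∈ Finset.Icc (-1 : ℤ) 1,
      (i : ℝ) ^ 2 * p i j) = a + b + c + e + f + g := by
    simp [hIcc]; ring
  have hY : (∑ i ∈ Finset.Icc (-1 : ℤ) 1, ∑ j ∈ Finset.Icc (-1 : ℤ) 1,
      (j : ℝ) ^ 2 * p i j) = a + c + d + e + g + h := by
    simp [hIcc]; ring
  rw [hM, hX, hY]
  have hkey := key_ineq a b c d e f g h ha hb hc hd he hf hg hh t0 t1 t2 t3 t4 t5 t6 t7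
  have hXpos : 0 < a + b + c + e + f + g := by linarith
  have hYpos : 0 < a + c + d + e + g + h := by linarith
  refine ⟨hkey, hXpos, hYpos, ?_, ?_⟩ <;>
  · unfold walkAngle
    rw [hM, hX, hY]
    set M := a - c + e - g with hMdef
    set P := (a + b + c + e + f + g) * (a + c + d + e + g + h) with hPdef
    have hPpos : 0 < P := mul_pos hXpos hYpos
    have hs : 0 < Real.sqrt P := Real.sqrt_pos.2 hPpos
    have hs2 : Real.sqrt P ^ 2 = P := Real.sq_sqrt hPpos.le
    have habs : |M| < Real.sqrt P := by
      rw [← Real.sqrt_sq_eq_abs]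
      exact Real.sqrt_lt_sqrt (sq_nonneg M) hkey
    have hlt : M < Real.sqrt P := (abs_lt.1 habs).2
    have hgt : -Real.sqrt P < M := (abs_lt.1 habs).1
    first
    | exact Real.arccos_pos.2 ((div_lt_one hs).2 (by linarith))
    | · rw [Real.arccos]
        have h' : -(Real.pi / 2) < Real.arcsin (-M / Real.sqrt P) :=
          Real.neg_pi_div_two_lt_arcsin.2 ((lt_div_iff₀ hs).2 (by linarith))
        linarith
end

section
/- Let r > 0 and let p be a nonzero real number. Define w(x) = x / ((x − p)(x − r²/p)) for x ∈ C outside the poles. Then for every complex number x with |x| = r, x ≠ p and x ≠ r²/p, one has w(x) = w(x̄), where x̄ denotes the complex conjugate of x; in particular w takes real values on the circle |x| = r. -/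
open Complex

theorem conformal_candidate_symmetric_on_circle (r : ℝ) (hr : 0 < r) (p : ℝ) (hp : p ≠ 0)
    (w : ℂ → ℂ)
    (hw : ∀ x : ℂ, w x = x / ((x - (p : ℂ)) * (x - ((r : ℂ) ^ 2 / (p : ℂ)))))
    (x : ℂ) (hx : ‖x‖ = r) (hxp : x ≠ (p : ℂ)) (hxq : x ≠ (r : ℂ) ^ 2 / (p : ℂ)) :
    w x = w ((starRingEnd ℂ) x) ∧ (w x).im = 0 := by
  have hrc : (r : ℂ) ≠ 0 := by exact_mod_cast hr.ne'
  have hpc : (p : ℂ) ≠ 0 := by exact_mod_cast hp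
  have hx0 : x ≠ 0 := by
    intro h; rw [h] at hx; simp at hx; exact hr.ne' hx.symm
  have hconj : (starRingEnd ℂ) x = (r : ℂ) ^ 2 / x := by
    have h1 : x * (starRingEnd ℂ) x = (r : ℂ) ^ 2 := by
      rw [Complex.mul_conj]
      rw [← Complex.sq_norm, hx]
      norm_cast
    field_simp [← h1]
    linear_combination h1
  have h1 : x - (p : ℂ) ≠ 0 := sub_ne_zero.mpr hxp
  have h2 : x - (r : ℂ) ^ 2 / (p : ℂ) ≠ 0 := sub_ne_zero.mpr hxq
  have key : w x = w ((starRingEnd ℂ) x) := by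
    rw [hw, hw, hconj]
    have d1 : (r : ℂ) ^ 2 / x - (p : ℂ) ≠ 0 := by
      intro h
      apply h2
      field_simp at h ⊢
      linear_combination -h
    have d2 : (r : ℂ) ^ 2 / x - (r : ℂ) ^ 2 / (p : ℂ) ≠ 0 := by
      intro h
      apply h1
      field_simp at h
      have h' : (r : ℂ) ^ 2 * ((p : ℂ) - x) = 0 := by linear_combination h
      rcases mul_eq_zero.mp h' with h'' | h''
      · exact absurd h'' (pow_ne_zero 2 hrc)
      · linear_combination -h''
    rw [div_eq_div_iff (mul_ne_zero h1 h2) (mul_ne_zero d1 d2)]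
    field_simp
    ring
  have hcw : w ((starRingEnd ℂ) x) = (starRingEnd ℂ) (w x) := by
    rw [hw x, hw ((starRingEnd ℂ) x)]
    simp only [map_div₀, map_mul, map_sub, map_pow, Complex.conj_ofReal]
  refine ⟨key, ?_⟩
  have : w x = (starRingEnd ℂ) (w x) := by conv_lhs => rw [key, hcw]
  have := Complex.conj_eq_iff_im.mp this.symm
  exact this
end
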